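/- Let F_q be a finite field and v₁, v₂ ∈ F_q^*. Let J_{GH,v} denote the set of j-invariants of generalized Hessian curves E_{GH,u,v} as u ranges over {u ∈ F_q : u^3 ≠ 27v}. If v₁/v₂ is a cube in F_q then J_{GH,v₁} = J_{GH,v₂}; if v₁/v₂ is not a cube then J_{GH,v₁} ∩ J_{GH,v₂} ⊆ {0}. -/

import Mathlib

/-- The set of `j`-invariants of generalized Hessian curves `X³+Y³+v = uXY` over `F_q`. -/
def genHessianJSet (F : Type*) [Field F] (v : F) : Set F :=
  {j : F | ∃ u : F, u ^ 3 ≠ 27 * v ∧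
    j = (1 / v) * (u * (u ^ 3 + 216 * v) / (u ^ 3 - 27 * v)) ^ 3}

lemma aux_div (F : Type*) [Field F] (v₂ ζ u N D : F) (hζ0 : ζ ≠ 0) (hv₂ : v₂ ≠ 0) (hD : D ≠ 0) :
    1 / (ζ ^ 3 * v₂) * (u * N / D) ^ 3 = 1 / v₂ * ((u / ζ) * (N / ζ ^ 3) / (D / ζ ^ 3)) ^ 3 := by
  have hz : ζ ^ 12 * ζ⁻¹ ^ 12 = 1 := by rw [← mul_pow, mul_inv_cancel₀ hζ0, one_pow]
  have hv : v₂ * v₂⁻¹ = 1 := mul_inv_cancel₀ hv₂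
  have hd : D ^ 3 * D⁻¹ ^ 3 = 1 := by rw [← mul_pow, mul_inv_cancel₀ hD, one_pow]
  field_simp

lemma genHessianJSet_subset (F : Type*) [Field F] (v₁ v₂ : F) (hv₁ : v₁ ≠ 0) (hv₂ : v₂ ≠ 0)
    (ζ : F) (hζ : ζ ^ 3 = v₁ / v₂) : genHessianJSet F v₁ ⊆ genHessianJSet F v₂ := by
  have hζ0 : ζ ≠ 0 := by
    intro h
    rw [h] at hζ
    exact hv₁ (by field_simp at hζ; simpa using hζ.symm)
  have hζ3 : ζ ^ 3 * v₂ = v₁ := by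
    field_simp at hζ; linear_combination hζ
  subst hζ3
  rintro j ⟨u, hu, hj⟩
  have h1 : u ^ 3 - 27 * (ζ ^ 3 * v₂) ≠ 0 := sub_ne_zero.mpr hu
  refine ⟨u / ζ, ?_, ?_⟩
  · intro h
    apply hu
    field_simp at h
    linear_combination h
  · have e1 : (u / ζ) ^ 3 - 27 * v₂ = (u ^ 3 - 27 * (ζ ^ 3 * v₂)) / ζ ^ 3 := by
      field_simp
    have e2 : (u / ζ) ^ 3 + 216 * v₂ = (u ^ 3 + 216 * (ζ ^ 3 * v₂)) / ζ ^ 3 := by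
      field_simp
    rw [hj, e1, e2]
    exact aux_div F v₂ ζ u _ _ hζ0 hv₂ h1

/-- If `v₁/v₂` is a cube in `F_q`, the `j`-invariant sets of generalized Hessian curves with
constants `v₁`, `v₂` coincide; otherwise they intersect in at most `{0}`. -/
theorem generalized_hessian_j_sets
    (F : Type*) [Field F] [Fintype F] (v₁ v₂ : F) (hv₁ : v₁ ≠ 0) (hv₂ : v₂ ≠ 0) :
    ((∃ ζ : F, ζ ^ 3 = v₁ / v₂) → genHessianJSet F v₁ = genHessianJSet F v₂) ∧
    (¬(∃ ζ : F, ζ ^ 3 = v₁ / v₂) →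
      genHessianJSet F v₁ ∩ genHessianJSet F v₂ ⊆ {0}) := by
  constructor
  · rintro ⟨ζ, hζ⟩
    have hζ0 : ζ ≠ 0 := by
      intro h
      rw [h] at hζ
      exact hv₁ (by field_simp at hζ; simpa using hζ.symm)
    apply Set.Subset.antisymm
    · exact genHessianJSet_subset F v₁ v₂ hv₁ hv₂ ζ hζ
    · refine genHessianJSet_subset F v₂ v₁ hv₂ hv₁ ζ⁻¹ ?_
      rw [inv_pow, hζ]
      field_simp
  · rintro hnc j ⟨⟨u₁, hu₁, hj₁⟩, ⟨u₂, hu₂, hj₂⟩⟩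
    by_contra hj0
    simp only [Set.mem_singleton_iff] at hj0
    set A := u₁ * (u₁ ^ 3 + 216 * v₁) / (u₁ ^ 3 - 27 * v₁) with hA
    set B := u₂ * (u₂ ^ 3 + 216 * v₂) / (u₂ ^ 3 - 27 * v₂) with hB
    clear_value A B
    have hA0 : A ≠ 0 := by
      intro h
      apply hj0
      rw [hj₁, h]
      ring
    have hB0 : B ≠ 0 := by
      intro h
      apply hj0
      rw [hj₂, h]
      ring
    apply hnc
    refine ⟨A / B, ?_⟩
    have key : (1 / v₁) * A ^ 3 = (1 / v₂) * B ^ 3 := by rw [← hj₁, ← hj₂]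
    field_simp at key
    rw [div_pow, div_eq_div_iff (pow_ne_zero 3 hB0) hv₂]
    linear_combination key
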